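/- Let m > 0, n ≥ 1, and for r > 0 let c(r) ∈ [0,1) solve c = (|P|−c)/sqrt(m²r²+(|P|−c)²) with |P| = p⁽ⁿ⁺¹⁾ (the unique momentum with ½|P|² = E₀⁽ⁿ⁺¹⁾(P)). Define f(r) := (1 − c(r)²)^{3/2} / c(r)². Then f(r) ≤ ½ m r for all 0 < r ≤ n+1, and consequently f'(r) ≤ m for all 0 < r ≤ n+1. -/

import Mathlib

set_option maxHeartbeats 1600000

lemma psi_hasDerivAt (m Pn x : ℝ) (hm : 0 < m) (hx : 0 < x) (hx1 : x < 1) :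
    HasDerivAt (fun y : ℝ => Real.sqrt (1 - y^2) * (Pn - y) / (m * y))
      ((x^3 - Pn) / (m * Real.sqrt (1 - x^2) * x^2)) x := by
  have hu2 : Real.sqrt (1 - x^2) ^ 2 = 1 - x^2 :=
    Real.sq_sqrt (by nlinarith)
  have hupos : 0 < Real.sqrt (1 - x^2) := Real.sqrt_pos.mpr (by nlinarith)
  have h1 : HasDerivAt (fun y : ℝ => 1 - y^2) (-(2*x)) x := by
    simpa using ((hasDerivAt_pow 2 x).const_sub 1)
  have hsq : HasDerivAt (fun y : ℝ => Real.sqrt (1 - y^2))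
      ((-(2*x)) / (2 * Real.sqrt (1 - x^2))) x := h1.sqrt (by nlinarith)
  have hlin : HasDerivAt (fun y : ℝ => Pn - y) (-1) x := by
    simpa using (hasDerivAt_id x).const_sub Pn
  have hnum := hsq.mul hlin
  have hden : HasDerivAt (fun y : ℝ => m * y) m x := by
    simpa using (hasDerivAt_id x).const_mul m
  have h := hnum.div hden (by positivity)
  convert h using 1
  have hu : Real.sqrt (1 - x^2) ≠ 0 := ne_of_gt hupos
  show _ = ((_ * (m * x) - (Real.sqrt (1 - x^2) * (Pn - x)) * m) / (m * x) ^ 2)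
  field_simp
  ring_nf
  linear_combination Pn * hu2
  all_goals rfl

lemma key_facts (m r Pn cr : ℝ) (hm : 0 < m) (hr : 0 < r) (hPn : 0 < Pn)
    (h0 : 0 ≤ cr) (h1 : cr < 1)
    (h2 : cr = (Pn - cr) / Real.sqrt (m^2*r^2 + (Pn - cr)^2)) :
    0 < cr ∧ (Pn - cr) * Real.sqrt (1 - cr^2) = cr * (m*r) ∧ cr < Pn := by
  set S := Real.sqrt (m^2*r^2 + (Pn - cr)^2) with hS
  have hSpos : 0 < S := Real.sqrt_pos.mpr (by positivity)
  have hS2 : S^2 = m^2*r^2 + (Pn - cr)^2 := Real.sq_sqrt (by positivity)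
  have heq : cr * S = Pn - cr := by
    field_simp at h2; linarith [h2]
  have hcrpos : 0 < cr := by
    rcases lt_or_eq_of_le h0 with h | h
    · exact h
    · exfalso
      have : Pn - cr = 0 := by rw [← heq, ← h]; ring
      simp [← h] at this; linarith
  have hPc : cr < Pn := by nlinarith [mul_pos hcrpos hSpos]
  have hu2 : Real.sqrt (1 - cr^2) ^ 2 = 1 - cr^2 := Real.sq_sqrt (by nlinarith)
  have hupos : 0 < Real.sqrt (1 - cr^2) := Real.sqrt_pos.mpr (by nlinarith)
  refine ⟨hcrpos, ?_, hPc⟩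
  have hs2 : (S * Real.sqrt (1 - cr^2))^2 = (m*r)^2 := by
    nlinarith [hS2, hu2, heq]
  have hsu : S * Real.sqrt (1 - cr^2) = m * r := by
    have hfac : (S * Real.sqrt (1 - cr^2) - m*r) * (S * Real.sqrt (1 - cr^2) + m*r) = 0 := by
      linear_combination hs2
    rcases mul_eq_zero.mp hfac with h | h
    · linarith
    · nlinarith [mul_pos hSpos hupos, mul_pos hm hr]
  calc (Pn - cr) * Real.sqrt (1 - cr^2) = cr * (S * Real.sqrt (1 - cr^2)) := by rw [← heq]; ring
    _ = cr * (m*r) := by rw [hsu]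

lemma mono_aux (m r s Pn a b : ℝ) (hm : 0 < m) (hr : 0 < r) (hrs : r ≤ s)
    (ha : 0 < a) (ha1 : a < 1) (hb : 0 < b) (hb1 : b < 1)
    (hA : (Pn - a) * Real.sqrt (1 - a^2) = a * (m*r))
    (hB : (Pn - b) * Real.sqrt (1 - b^2) = b * (m*s)) : b ≤ a := by
  by_contra hab
  push_neg at hab
  have hua : 0 < Real.sqrt (1 - a^2) := Real.sqrt_pos.mpr (by nlinarith)
  have hub : 0 < Real.sqrt (1 - b^2) := Real.sqrt_pos.mpr (by nlinarith)
  have huab : Real.sqrt (1 - b^2) < Real.sqrt (1 - a^2) :=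
    Real.sqrt_lt_sqrt (by nlinarith) (by nlinarith)
  have hPa : Pn = a + (a / Real.sqrt (1 - a^2)) * (m*r) := by
    field_simp; linarith [hA]
  have hPb : Pn = b + (b / Real.sqrt (1 - b^2)) * (m*s) := by
    field_simp; linarith [hB]
  have hdiv : a / Real.sqrt (1 - a^2) < b / Real.sqrt (1 - b^2) := by
    rw [div_lt_div_iff₀ hua hub]
    nlinarith
  have hmul : (a / Real.sqrt (1 - a^2)) * (m*r) < (b / Real.sqrt (1 - b^2)) * (m*s) :=
    mul_lt_mul hdiv (by nlinarith) (by positivity) (by positivity)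
  linarith

theorem f_bound_and_derivative_bound
    (d : ℕ) (m : ℝ) (hm : 0 < m) (n : ℕ) (hn : 1 ≤ n)
    (P : EuclideanSpace ℝ (Fin d)) (hP : P ≠ 0)
    (c : ℝ → ℝ)
    (hc : ∀ r : ℝ, 0 < r → c r ∈ Set.Ico (0 : ℝ) 1 ∧
      c r = (‖P‖ - c r) / Real.sqrt (m ^ 2 * r ^ 2 + (‖P‖ - c r) ^ 2))
    (hcrit : ‖P‖ ^ 2 / 2 =
      (c ((n : ℝ) + 1)) ^ 2 / 2 +
        Real.sqrt (m ^ 2 * ((n : ℝ) + 1) ^ 2 + (‖P‖ - c ((n : ℝ) + 1)) ^ 2)) :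
    (∀ r : ℝ, 0 < r → r ≤ (n : ℝ) + 1 →
      (1 - (c r) ^ 2) ^ ((3 : ℝ) / 2) / (c r) ^ 2 ≤ m * r / 2) ∧
    (∀ r : ℝ, 0 < r → r ≤ (n : ℝ) + 1 → ∀ f' : ℝ,
      HasDerivAt (fun s => (1 - (c s) ^ 2) ^ ((3 : ℝ) / 2) / (c s) ^ 2) f' r →
        f' ≤ m) := by
  have hPn : 0 < ‖P‖ := norm_pos_iff.mpr hP
  obtain ⟨Pn, hPdef⟩ : ∃ p : ℝ, ‖P‖ = p := ⟨_, rfl⟩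
  rw [hPdef] at hPn hc hcrit
  clear hPdef hP P
  set r₁ : ℝ := (n : ℝ) + 1 with hr₁def
  have hr₁pos : (0:ℝ) < r₁ := by positivity
  have hfacts : ∀ r : ℝ, 0 < r → 0 < c r ∧ c r < 1 ∧
      (Pn - c r) * Real.sqrt (1 - (c r)^2) = c r * (m*r) ∧ c r < Pn := by
    intro r hr
    obtain ⟨hmem, h2⟩ := hc r hr
    obtain ⟨hp, he, hlt⟩ := key_facts m r Pn (c r) hm hr hPn hmem.1 hmem.2 h2
    exact ⟨hp, hmem.2, he, hlt⟩
  obtain ⟨hc₁pos, hc₁lt, hkey₁, hc₁P⟩ := hfacts r₁ hr₁pos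
  -- the critical identity : c₁ (Pn + c₁) = 2
  have hcrit2 : c r₁ * (Pn + c r₁) = 2 := by
    obtain ⟨hmem, h2⟩ := hc r₁ hr₁pos
    set S := Real.sqrt (m^2*r₁^2 + (Pn - c r₁)^2) with hS
    have hSpos : 0 < S := Real.sqrt_pos.mpr (by positivity)
    have heq : c r₁ * S = Pn - c r₁ := by
      field_simp at h2; linarith [h2]
    have hSval : S = (Pn - c r₁) / c r₁ := by
      field_simp; linarith [heq]
    have hcrit' : Pn^2/2 = (c r₁)^2/2 + (Pn - c r₁)/(c r₁) := by
      rw [← hSval]; exact hcrit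
    have hcrit'' : c r₁ * Pn^2 = (c r₁)^3 + 2*(Pn - c r₁) := by
      field_simp at hcrit'; linarith [hcrit']
    have hfac : (Pn - c r₁) * (c r₁ * (Pn + c r₁) - 2) = 0 := by
      linear_combination hcrit''
    rcases mul_eq_zero.mp hfac with h | h
    · linarith
    · linarith
  have hPn1 : 1 < Pn := by nlinarith
  -- the key inequality for r ≤ r₁
  have hge : ∀ r : ℝ, 0 < r → r ≤ r₁ → 2 ≤ c r * Pn + (c r)^2 := by
    intro r hr hrle
    obtain ⟨hp, h1, he, _⟩ := hfacts r hr
    have hmono := mono_aux m r r₁ Pn (c r) (c r₁) hm hr hrle hp h1 hc₁pos hc₁lt he hkey₁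
    nlinarith
  -- part 1
  have part1 : ∀ r : ℝ, 0 < r → r ≤ r₁ →
      (1 - (c r) ^ 2) ^ ((3 : ℝ) / 2) / (c r) ^ 2 ≤ m * r / 2 := by
    intro r hr hrle
    obtain ⟨hp, h1, he, _⟩ := hfacts r hr
    have hgeq := hge r hr hrle
    set x := c r with hx
    have hu2 : Real.sqrt (1 - x^2) ^ 2 = 1 - x^2 := Real.sq_sqrt (by nlinarith)
    have hupos : 0 < Real.sqrt (1 - x^2) := Real.sqrt_pos.mpr (by nlinarith)
    have h32 : (1 - x^2) ^ ((3:ℝ)/2) = Real.sqrt (1 - x^2) ^ 3 := by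
      rw [Real.sqrt_eq_rpow, ← Real.rpow_natCast ((1 - x^2) ^ ((1:ℝ)/2)) 3,
        ← Real.rpow_mul (by nlinarith)]
      norm_num
    rw [h32, div_le_div_iff₀ (by positivity) (by norm_num)]
    have hmr : m*r*x^2 = (Pn - x) * Real.sqrt (1 - x^2) * x := by
      linear_combination x * he.symm
    rw [hmr]
    nlinarith [mul_nonneg hupos.le (by linarith : (0:ℝ) ≤ x*Pn + x^2 - 2), hu2,
      mul_pos hupos hp]
  refine ⟨part1, ?_⟩
  -- part 2
  intro r hr hrle f' hf'
  obtain ⟨hp, h1, he, hPc⟩ := hfacts r hr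
  set ψ : ℝ → ℝ := fun y => Real.sqrt (1 - y^2) * (Pn - y) / (m * y) with hψ
  have hψc : ∀ s : ℝ, 0 < s → ψ (c s) = s := by
    intro s hs
    obtain ⟨hp', h1', he', _⟩ := hfacts s hs
    show Real.sqrt (1 - (c s)^2) * (Pn - c s) / (m * c s) = s
    rw [div_eq_iff (by positivity)]
    linarith [he']
  have hanti : StrictAntiOn ψ (Set.Ioo 0 1) := by
    apply strictAntiOn_of_deriv_neg (convex_Ioo 0 1)
    · intro y hy
      exact (psi_hasDerivAt m Pn y hm hy.1 hy.2).differentiableAt.continuousAt.continuousWithinAt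
    · intro y hy
      rw [interior_Ioo] at hy
      rw [(psi_hasDerivAt m Pn y hm hy.1 hy.2).deriv]
      apply div_neg_of_neg_of_pos
      · nlinarith [hy.1, hy.2, hPn1, pow_lt_one₀ hy.1.le hy.2 (by norm_num : 3 ≠ 0)]
      · have hyu : 0 < Real.sqrt (1 - y^2) := Real.sqrt_pos.mpr (by nlinarith [hy.1, hy.2])
        exact mul_pos (mul_pos hm hyu) (pow_pos hy.1 2)
  set x := c r with hx
  have hmemx : x ∈ Set.Ioo (0:ℝ) 1 := ⟨hp, h1⟩
  -- continuity of c at r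
  have hcont : ContinuousAt c r := by
    rw [Metric.continuousAt_iff]
    intro ε hε
    set ε' := min (ε/2) (min (x/2) ((1-x)/2)) with hε'
    have hε'pos : 0 < ε' := lt_min (by linarith) (lt_min (by linarith) (by linarith))
    have hε'x : ε' ≤ x/2 := le_trans (min_le_right _ _) (min_le_left _ _)
    have hε'x1 : ε' ≤ (1-x)/2 := le_trans (min_le_right _ _) (min_le_right _ _)
    have hxlo : (x - ε') ∈ Set.Ioo (0:ℝ) 1 := ⟨by linarith, by linarith⟩
    have hxhi : (x + ε') ∈ Set.Ioo (0:ℝ) 1 := ⟨by linarith, by linarith⟩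
    have hrhi : r < ψ (x - ε') := by
      have := hanti hxlo hmemx (by linarith)
      rw [hψc r hr] at this; linarith
    have hrlo : ψ (x + ε') < r := by
      have := hanti hmemx hxhi (by linarith)
      rw [hψc r hr] at this; linarith
    refine ⟨min (ψ (x - ε') - r) (min (r - ψ (x + ε')) r),
      lt_min (by linarith) (lt_min (by linarith) hr), ?_⟩
    intro s hs
    rw [Real.dist_eq] at hs
    have hs1 : s < ψ (x - ε') := by
      have h := abs_lt.mp (lt_of_lt_of_le hs (min_le_left _ _))
      linarith [h.1, h.2]
    have hs2 : ψ (x + ε') < s := by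
      have h := abs_lt.mp (lt_of_lt_of_le hs ((min_le_right _ _).trans (min_le_left _ _)))
      linarith [h.1, h.2]
    have hspos : 0 < s := by
      have h := abs_lt.mp (lt_of_lt_of_le hs ((min_le_right _ _).trans (min_le_right _ _)))
      linarith [h.1]
    obtain ⟨hp', h1', _, _⟩ := hfacts s hspos
    have hmemcs : c s ∈ Set.Ioo (0:ℝ) 1 := ⟨hp', h1'⟩
    have hψs := hψc s hspos
    have hlow : x - ε' < c s := by
      by_contra hcon
      push_neg at hcon
      rcases eq_or_lt_of_le hcon with heq | hlt
      · rw [← heq] at hs1; rw [hψs] at hs1; linarith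
      · have := hanti hmemcs hxlo hlt
        rw [hψs] at this; linarith
    have hhigh : c s < x + ε' := by
      by_contra hcon
      push_neg at hcon
      rcases eq_or_lt_of_le hcon with heq | hlt
      · rw [heq] at hs2; rw [hψs] at hs2; linarith
      · have := hanti hxhi hmemcs hlt
        rw [hψs] at this; linarith
    rw [Real.dist_eq, abs_lt]
    constructor
    · have : ε' ≤ ε/2 := min_le_left _ _
      linarith
    · have : ε' ≤ ε/2 := min_le_left _ _
      linarith
  -- derivative of c via inverse function
  have hu2 : Real.sqrt (1 - x^2) ^ 2 = 1 - x^2 := Real.sq_sqrt (by nlinarith)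
  have hupos : 0 < Real.sqrt (1 - x^2) := Real.sqrt_pos.mpr (by nlinarith)
  have hψder : HasDerivAt ψ ((x^3 - Pn) / (m * Real.sqrt (1 - x^2) * x^2)) (c r) :=
    psi_hasDerivAt m Pn x hm hp h1
  have hDneg : (x^3 - Pn) / (m * Real.sqrt (1 - x^2) * x^2) < 0 :=
    div_neg_of_neg_of_pos (by nlinarith) (by positivity)
  have hev : ∀ᶠ y in nhds r, ψ (c y) = y := by
    filter_upwards [eventually_gt_nhds hr] with y hy using hψc y hy
  have hcder : HasDerivAt c (((x^3 - Pn) / (m * Real.sqrt (1 - x^2) * x^2))⁻¹) r :=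
    hψder.of_local_left_inverse hcont (ne_of_lt hDneg) hev
  -- derivative of g(y) = (1-y²)^{3/2}/y²
  have hg1 : HasDerivAt (fun y : ℝ => 1 - y^2) (-(2*x)) x := by
    simpa using ((hasDerivAt_pow 2 x).const_sub 1)
  have hgpow : HasDerivAt (fun y : ℝ => (1 - y^2) ^ ((3:ℝ)/2))
      ((-(2*x)) * ((3:ℝ)/2) * (1 - x^2) ^ ((3:ℝ)/2 - 1)) x :=
    hg1.rpow_const (Or.inr (by norm_num))
  have hgden : HasDerivAt (fun y : ℝ => y^2) (2*x) x := by
    simpa using hasDerivAt_pow 2 x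
  have hgd := hgpow.div hgden (by positivity)
  have hcomp := hgd.comp r hcder
  have hf'eq : f' = ((-(2*x)) * ((3:ℝ)/2) * (1 - x^2) ^ ((3:ℝ)/2 - 1) * x^2 -
      (1 - x^2) ^ ((3:ℝ)/2) * (2*x)) / (x^2)^2 *
      ((x^3 - Pn) / (m * Real.sqrt (1 - x^2) * x^2))⁻¹ := by
    apply hf'.unique
    exact hcomp
  -- simplify the rpow terms
  have h12 : (1 - x^2) ^ ((3:ℝ)/2 - 1) = Real.sqrt (1 - x^2) := by
    rw [Real.sqrt_eq_rpow]
    norm_num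
  have h32 : (1 - x^2) ^ ((3:ℝ)/2) = Real.sqrt (1 - x^2) ^ 3 := by
    rw [Real.sqrt_eq_rpow, ← Real.rpow_natCast ((1 - x^2) ^ ((1:ℝ)/2)) 3,
      ← Real.rpow_mul (by nlinarith)]
    norm_num
  rw [hf'eq, h12, h32]
  set u := Real.sqrt (1 - x^2) with hu
  have hG : ((-(2*x)) * ((3:ℝ)/2) * u * x^2 - u^3 * (2*x)) / (x^2)^2
      = -(u*(x^2+2))/x^3 := by
    field_simp
    ring_nf
    linear_combination (-2) * hu2
  rw [hG, ← div_eq_mul_inv, div_le_iff_of_neg hDneg]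
  have hside : m * ((x^3 - Pn) / (m * u * x^2)) = (x^3 - Pn)/(u*x^2) := by
    field_simp
  rw [hside, div_le_div_iff₀ (by positivity) (by positivity)]
  have hgeq := hge r hr hrle
  nlinarith [hu2, mul_le_mul_of_nonneg_right hgeq (sq_nonneg x), hp, hupos]
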